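/- arXiv:1107.4387 — 2 statements merged into one kernel-verified Lean document; each statement's English description precedes it below -/
import Mathlib

section
/- Let G be a finite cyclic group of order n written additively, let r divide n, let H be the subgroup of G of order n/r, and let N ∈ G. Then there exists a coset S of H such that for every integer k with 1 ≤ k < ⌈r/3⌉ and every choice of 3k elements P₁, …, P_{3k} ∈ S, the sum P₁ + ⋯ + P_{3k} is not equal to k·N. -/
lemma stmt6_key (r : ℕ) (hr0 : 0 < r) (ν : ℤ) :
    ∃ a : ℤ, ∀ k : ℕ, 1 ≤ k → k < (r + 2) / 3 → ¬ (r : ℤ) ∣ (k : ℤ) * (ν - 3 * a) := by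
  by_cases h3r : 3 ∣ r
  · by_cases h3ν : (3 : ℤ) ∣ ν
    · obtain ⟨w, rfl⟩ := h3ν
      refine ⟨w - 1, ?_⟩
      intro k hk1 hk2 hdvd
      obtain ⟨s, rfl⟩ := h3r
      have hx : (k : ℤ) * (3 * w - 3 * (w - 1)) = 3 * k := by ring
      rw [hx] at hdvd
      have hs : (s : ℤ) ∣ (k : ℤ) := by
        rcases hdvd with ⟨t, ht⟩
        exact ⟨t, by push_cast at ht ⊢; linarith⟩
      have hs' : s ∣ k := Int.ofNat_dvd.mp hs
      have := Nat.le_of_dvd (by omega) hs'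
      omega
    · have hu : IsUnit ((ν : ZMod 3)) := by
        rw [isUnit_iff_ne_zero]
        simpa [ZMod.intCast_zmod_eq_zero_iff_dvd] using h3ν
      have : NeZero r := ⟨by omega⟩
      obtain ⟨U, hU⟩ := ZMod.unitsMap_surjective h3r hu.unit
      set x : ℕ := (U : ZMod r).val with hxdef
      have hcop : Nat.Coprime x r := ZMod.val_coe_unit_coprime U
      have hcast : ((x : ℕ) : ZMod 3) = (ν : ZMod 3) := by
        have := congrArg (fun (u : (ZMod 3)ˣ) => (u : ZMod 3)) hU
        simp only [ZMod.unitsMap_def, Units.coe_map, MonoidHom.coe_coe, IsUnit.unit_spec] at this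
        rw [hxdef, ZMod.natCast_val, ← this, ZMod.castHom_apply]
      have h3d : (3 : ℤ) ∣ ν - (x : ℤ) := by
        have h0 : (((ν - (x : ℤ)) : ℤ) : ZMod 3) = 0 := by
          push_cast
          rw [hcast]
          ring
        exact (ZMod.intCast_zmod_eq_zero_iff_dvd _ 3).mp h0
      obtain ⟨a, ha⟩ := h3d
      refine ⟨a, ?_⟩
      intro k hk1 hk2 hdvd
      have hx : ν - 3 * a = (x : ℤ) := by linarith
      rw [hx] at hdvd
      have hcopz : IsCoprime (r : ℤ) (x : ℤ) := by
        rw [Int.isCoprime_iff_gcd_eq_one]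
        simpa [Int.gcd_natCast_natCast] using hcop.symm
      have hrk : (r : ℤ) ∣ (k : ℤ) := hcopz.dvd_of_dvd_mul_right hdvd
      have := Nat.le_of_dvd (by omega) (Int.ofNat_dvd.mp hrk)
      omega
  · have hcop3 : IsCoprime (3 : ℤ) (r : ℤ) := by
      rw [Int.isCoprime_iff_gcd_eq_one]
      have : Nat.Coprime 3 r := (Nat.Prime.coprime_iff_not_dvd Nat.prime_three).mpr h3r
      have h := Int.gcd_natCast_natCast 3 r
      simpa [this] using h
    obtain ⟨u, v, huv⟩ := hcop3
    refine ⟨u * (ν - 1), ?_⟩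
    intro k hk1 hk2 hdvd
    have key : (k : ℤ) * (ν - 3 * (u * (ν - 1))) = k + ((k : ℤ) * v * (ν - 1)) * r := by
      linear_combination (-(k : ℤ) * (ν - 1)) * huv
    have hrk : (r : ℤ) ∣ (k : ℤ) := by
      have h2 : (r : ℤ) ∣ ((k : ℤ) * v * (ν - 1)) * r := ⟨(k : ℤ) * v * (ν - 1), mul_comm _ _⟩
      have := dvd_sub (key ▸ hdvd) h2
      simpa using this
    have := Nat.le_of_dvd (by omega) (Int.ofNat_dvd.mp hrk)
    omega

theorem stmt_6 (G : Type*) [AddCommGroup G] [Fintype G] [IsAddCyclic G]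
    (n r : ℕ) (hn : Fintype.card G = n) (hr : r ∣ n) (hr0 : 0 < r)
    (H : AddSubgroup G) (hH : Nat.card H = n / r) (N : G) :
    ∃ g : G, ∀ k : ℕ, 1 ≤ k → k < (r + 2) / 3 →
      ∀ P : Fin (3 * k) → G, (∀ i, P i - g ∈ H) →
        (∑ i, P i) ≠ k • N := by
  obtain ⟨σ, hσ⟩ := IsAddCyclic.exists_generator (α := G)
  obtain ⟨ν, hν⟩ := AddSubgroup.mem_zmultiples_iff.mp (hσ N)
  set m : ℕ := n / r with hm
  have hn0 : 0 < n := hn ▸ Fintype.card_pos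
  have hm0 : 0 < m := Nat.div_pos (Nat.le_of_dvd hn0 hr) hr0
  have hrm : r * m = n := Nat.mul_div_cancel' hr
  have hord : addOrderOf σ = n := by
    rw [addOrderOf_eq_card_of_forall_mem_zmultiples hσ, Nat.card_eq_fintype_card, hn]
  have hkill : ∀ x : G, x ∈ H → m • x = 0 := by
    intro x hx
    have h1 : (Nat.card H) • (⟨x, hx⟩ : H) = 0 := card_nsmul_eq_zero'
    rw [hH] at h1
    have := congrArg (Subtype.val) h1
    simpa using this
  obtain ⟨a, ha⟩ := stmt6_key r hr0 ν
  refine ⟨a • σ, ?_⟩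
  intro k hk1 hk2 P hP hsum
  set g : G := a • σ with hg
  have hmem : (∑ i, (P i - g)) ∈ H := AddSubgroup.sum_mem H (fun i _ => hP i)
  have hsum2 : (∑ i, (P i - g)) = k • N - (3 * k) • g := by
    have : ∑ i : Fin (3 * k), (P i - g) = (∑ i, P i) - (3 * k) • g := by
      rw [Finset.sum_sub_distrib, Finset.sum_const, Finset.card_univ, Fintype.card_fin]
    rw [this, hsum]
  have hzero : m • (k • N - (3 * k) • g) = 0 := hsum2 ▸ hkill _ hmem
  have hform : k • N - (3 * k) • g = (((k : ℤ) * (ν - 3 * a))) • σ := by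
    have e1 : k • N = ((k : ℤ) * ν) • σ := by rw [← hν, ← natCast_zsmul _ k, smul_smul]
    have e2 : (3 * k) • g = (((3 * k : ℕ) : ℤ) * a) • σ := by
      rw [hg, ← natCast_zsmul _ (3 * k), smul_smul]
    rw [e1, e2, ← sub_smul]
    congr 1
    push_cast
    ring
  rw [hform, ← natCast_zsmul, smul_smul] at hzero
  have hdvd : ((addOrderOf σ : ℤ)) ∣ (m : ℤ) * ((k : ℤ) * (ν - 3 * a)) :=
    addOrderOf_dvd_iff_zsmul_eq_zero.mpr hzero
  rw [hord] at hdvd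
  have hn' : (n : ℤ) = (m : ℤ) * (r : ℤ) := by
    rw [← hrm]; push_cast; ring
  rw [hn'] at hdvd
  have : (r : ℤ) ∣ (k : ℤ) * (ν - 3 * a) :=
    (mul_dvd_mul_iff_left (by exact_mod_cast hm0.ne' : (m : ℤ) ≠ 0)).mp hdvd
  exact ha k hk1 hk2 this
end

section
/- Let G be a finite abelian group and H a subgroup such that the quotient G/H is cyclic of order r. Let N ∈ G. Then there exists a coset S of H in G such that for every integer k with 1 ≤ k < ⌈r/3⌉, no sum of 3k elements of S equals k·N. -/
theorem stmt_7 (G : Type*) [AddCommGroup G] [Fintype G]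
    (H : AddSubgroup G) (r : ℕ) (hr : Nat.card (G ⧸ H) = r)
    (hcyc : IsAddCyclic (G ⧸ H)) (N : G) :
    ∃ g : G, ∀ k : ℕ, 1 ≤ k → k < (r + 2) / 3 →
      ∀ P : Fin (3 * k) → G, (∀ i, P i - g ∈ H) →
        (∑ i, P i) ≠ k • N := by
  obtain ⟨x, hx⟩ := hcyc
  set π := QuotientAddGroup.mk' H with hπ
  obtain ⟨m, hm⟩ := hx (π N)
  have hm' : m • x = π N := hm
  obtain ⟨k0, hk1, hk3, t, ht⟩ : ∃ k0 : ℕ, 1 ≤ k0 ∧ k0 ≤ 3 ∧ ∃ t : ℤ, 3 * t = m + k0 :=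
    ⟨(3 - m % 3).toNat, by omega, by omega, (m + 3 - m % 3) / 3, by omega⟩
  obtain ⟨g, hg⟩ := QuotientAddGroup.mk'_surjective H (t • x)
  refine ⟨g, fun k hk1' hk2 P hP hsum => ?_⟩
  have hordx : addOrderOf x = r := by
    rw [addOrderOf_eq_card_of_forall_mem_zmultiples hx, hr]
  have him : π (∑ i, P i) = (3 * k) • (t • x) := by
    rw [map_sum]
    have hconst : ∀ i : Fin (3 * k), π (P i) = t • x := by
      intro i
      have : π (P i) = π g := (QuotientAddGroup.eq_iff_sub_mem ..).mpr (hP i)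
      rw [this, hg]
    rw [Finset.sum_congr rfl (fun i _ => hconst i)]
    simp [Finset.sum_const, Finset.card_univ]
  have heq : ((3 * k : ℕ) : ℤ) • (t • x) = ((k : ℕ) : ℤ) • (m • x) := by
    rw [natCast_zsmul, natCast_zsmul, ← him, hsum, map_nsmul, ← hm']
  rw [smul_smul, smul_smul] at heq
  have h0 : (((3 * k : ℕ) : ℤ) * t - ((k : ℕ) : ℤ) * m) • x = 0 := by
    rw [sub_smul, heq, sub_self]
  have hcoef : ((3 * k : ℕ) : ℤ) * t - ((k : ℕ) : ℤ) * m = ((k * k0 : ℕ) : ℤ) := by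
    push_cast
    linear_combination (k : ℤ) * ht
  rw [hcoef, natCast_zsmul] at h0
  have hdvd : r ∣ k * k0 := hordx ▸ addOrderOf_dvd_of_nsmul_eq_zero h0
  have hle : r ≤ k * k0 := Nat.le_of_dvd (by positivity) hdvd
  have hub : k * k0 ≤ 3 * k := by nlinarith
  omega
end
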